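/- Let R be an integral domain in which, for every nonzero finitely generated ideal I, every finitely generated ideal of the quotient ring R/I is principal. Then for any two invertible (fractional) ideals I and J of R, there is an isomorphism of R-modules I ⊕ J ≅ R ⊕ IJ. -/

import Mathlib

open nonZeroDivisors

section KaplanskyHelpers

open FractionalIdeal

variable {R : Type*} [CommRing R] [IsDomain R]

noncomputable def kapMulEquiv {K : Type*} [Field K] [Algebra R K] [IsFractionRing R K]
    (x : K) (hx : x ≠ 0) (I : FractionalIdeal R⁰ K) :
    (I : Submodule R K) ≃ₗ[R]
      ((spanSingleton R⁰ x * I : FractionalIdeal R⁰ K) : Submodule R K) := by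
  have hinj : Function.Injective (LinearMap.mulLeft R x) := fun a b h =>
    mul_left_cancel₀ hx h
  have hmap : Submodule.map (LinearMap.mulLeft R x) (I : Submodule R K)
      = ((spanSingleton R⁰ x * I : FractionalIdeal R⁰ K) : Submodule R K) := by
    rw [coe_mul, coe_spanSingleton]
    ext m
    simp only [Submodule.mem_map, LinearMap.mulLeft_apply, Submodule.mem_span_singleton_mul]
  exact (Submodule.equivMapOfInjective _ hinj _).trans (LinearEquiv.ofEq _ _ hmap)

theorem kapCoprimeEquiv {K : Type*} [Field K] [Algebra R K] [IsFractionRing R K]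
    (A B : FractionalIdeal R⁰ K) (hA : A ≤ 1) (hB : B ≤ 1) (hAB : A + B = 1) :
    Nonempty (((↥(A : Submodule R K)) × (↥(B : Submodule R K))) ≃ₗ[R]
      (R × ↥((A * B : FractionalIdeal R⁰ K) : Submodule R K))) := by
  have hA1 : (A : Submodule R K) ≤ 1 := by
    rw [← coe_one (S := R⁰) (P := K)]; exact coe_le_coe.mpr hA
  have hB1 : (B : Submodule R K) ≤ 1 := by
    rw [← coe_one (S := R⁰) (P := K)]; exact coe_le_coe.mpr hB
  have hsup : (A : Submodule R K) ⊔ (B : Submodule R K) = 1 := by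
    rw [← Submodule.add_eq_sup, ← coe_add, hAB, coe_one]
  have hint : (A : Submodule R K) ⊓ (B : Submodule R K)
      = ((A * B : FractionalIdeal R⁰ K) : Submodule R K) := by
    rw [coe_mul]
    apply le_antisymm
    · calc (A : Submodule R K) ⊓ B = ((A : Submodule R K) ⊓ B) * 1 := (mul_one _).symm
        _ = ((A : Submodule R K) ⊓ B) * ((A : Submodule R K) ⊔ B) := by rw [hsup]
        _ ≤ (A : Submodule R K) * B := by
            rw [Submodule.mul_sup]
            apply sup_le
            · calc ((A : Submodule R K) ⊓ B) * A ≤ (B : Submodule R K) * A :=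
                mul_le_mul' inf_le_right le_rfl
                _ = (A : Submodule R K) * B := mul_comm _ _
            · exact mul_le_mul' inf_le_left le_rfl
    · apply le_inf
      · calc (A : Submodule R K) * B ≤ A * 1 := mul_le_mul' le_rfl hB1
          _ = A := mul_one _
      · calc (A : Submodule R K) * B ≤ 1 * B := mul_le_mul' hA1 le_rfl
          _ = B := one_mul _
  have hMA : ((A * B : FractionalIdeal R⁰ K) : Submodule R K) ≤ A := by
    rw [← hint]; exact inf_le_left
  have hMB : ((A * B : FractionalIdeal R⁰ K) : Submodule R K) ≤ B := by
    rw [← hint]; exact inf_le_right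
  set f : ↥((A * B : FractionalIdeal R⁰ K) : Submodule R K) →ₗ[R]
      (↥(A : Submodule R K)) × (↥(B : Submodule R K)) :=
    LinearMap.prod (Submodule.inclusion hMA) (-(Submodule.inclusion hMB)) with hf
  have hfinj : Function.Injective f := by
    intro x y hxy
    have := congrArg Prod.fst hxy
    exact Submodule.inclusion_injective hMA this
  set g : ((↥(A : Submodule R K)) × (↥(B : Submodule R K))) →ₗ[R] K :=
    ((A : Submodule R K).subtype ∘ₗ LinearMap.fst R _ _)
      + ((B : Submodule R K).subtype ∘ₗ LinearMap.snd R _ _) with hg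
  have hgmem : ∀ p, g p ∈ (1 : Submodule R K) := by
    intro p
    exact add_mem (hA1 p.1.2) (hB1 p.2.2)
  set g' : ((↥(A : Submodule R K)) × (↥(B : Submodule R K))) →ₗ[R] ↥(1 : Submodule R K) :=
    g.codRestrict _ hgmem with hg'
  have halg : Function.Injective (Algebra.linearMap R K) := IsFractionRing.injective R K
  set e0 : R ≃ₗ[R] ↥(1 : Submodule R K) :=
    (LinearEquiv.ofInjective (Algebra.linearMap R K) halg).trans
      (LinearEquiv.ofEq _ _ (Submodule.one_eq_range (R := R) (A := K)).symm) with he0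
  set gR : ((↥(A : Submodule R K)) × (↥(B : Submodule R K))) →ₗ[R] R :=
    (e0.symm : ↥(1 : Submodule R K) →ₗ[R] R) ∘ₗ g' with hgR
  have hg'surj : Function.Surjective g' := by
    rintro ⟨z, hz⟩
    rw [← hsup] at hz
    obtain ⟨a, ha, b, hb, rfl⟩ := Submodule.mem_sup.mp hz
    exact ⟨(⟨a, ha⟩, ⟨b, hb⟩), rfl⟩
  have hgRsurj : Function.Surjective gR := by
    intro r
    obtain ⟨p, hp⟩ := hg'surj (e0 r)
    exact ⟨p, by simp [hgR, hp]⟩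
  have hexact : Function.Exact f gR := by
    intro p
    constructor
    · intro hp
      have hz : (p.1 : K) + (p.2 : K) = 0 := by
        have h0 : g' p = 0 := by
          have := congrArg e0 hp
          simpa [hgR] using this
        have := congrArg (Subtype.val) h0
        simpa [hg', hg] using this
      have hmem : (p.1 : K) ∈ (A : Submodule R K) ⊓ (B : Submodule R K) := by
        constructor
        · exact p.1.2
        · have h1 : (p.1 : K) = -(p.2 : K) := eq_neg_of_add_eq_zero_left hz
          rw [h1]; exact neg_mem p.2.2
      rw [hint] at hmem
      have h2 : -(p.1 : K) = (p.2 : K) := neg_eq_of_add_eq_zero_right hz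
      have hfx : f ⟨(p.1 : K), hmem⟩ = p := by
        refine Prod.ext (Subtype.ext rfl) (Subtype.ext ?_)
        simpa [hf] using h2
      exact ⟨_, hfx⟩
    · rintro ⟨x, rfl⟩
      have h0 : g (f x) = 0 := by simp [hg, hf]
      have hg'0 : g' (f x) = 0 := Subtype.ext (by simpa [hg'] using h0)
      show gR (f x) = 0
      rw [hgR]
      simp [hg'0]
  obtain ⟨l, hl⟩ := Module.projective_lifting_property gR LinearMap.id hgRsurj
  exact ⟨(((hexact.splitSurjectiveEquiv hfinj ⟨l, hl⟩).1 : _)).trans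
    (LinearEquiv.prodComm R _ _)⟩

/-- Given a unit fractional ideal, produce an element and an integral ideal with
`spanSingleton x * I = ↑c`, `x ≠ 0`, and `↑c` a unit. -/
theorem kapExistsIntegral {K : Type*} [Field K] [Algebra R K] [IsFractionRing R K]
    (I : FractionalIdeal R⁰ K) (hI : IsUnit I) :
    ∃ (x : K) (c : Ideal R), x ≠ 0 ∧ spanSingleton R⁰ x * I = ↑c ∧ IsUnit (c : FractionalIdeal R⁰ K) := by
  obtain ⟨a, c, ha, hc⟩ := exists_eq_spanSingleton_mul I
  have haK : (algebraMap R K a) ≠ 0 := fun h => ha (IsFractionRing.to_map_eq_zero_iff.mp h)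
  have hspan : IsUnit (spanSingleton R⁰ (algebraMap R K a)) := by
    apply IsUnit.of_mul_eq_one (spanSingleton R⁰ (algebraMap R K a)⁻¹)
    rw [spanSingleton_mul_spanSingleton, mul_inv_cancel₀ haK, spanSingleton_one]
  refine ⟨algebraMap R K a, c, haK, ?_, ?_⟩
  · rw [hc, ← mul_assoc, spanSingleton_mul_spanSingleton, mul_inv_cancel₀ haK,
      spanSingleton_one, one_mul]
  · have : (c : FractionalIdeal R⁰ K) = spanSingleton R⁰ (algebraMap R K a) * I := by
      rw [hc, ← mul_assoc, spanSingleton_mul_spanSingleton, mul_inv_cancel₀ haK,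
        spanSingleton_one, one_mul]
    rw [this]
    exact hspan.mul hI

end KaplanskyHelpers

set_option maxHeartbeats 1000000

/-- Kaplansky's theorem: if `R` is an integral domain such that for every nonzero
finitely generated ideal `I` every finitely generated ideal of `R ⧸ I` is principal,
then for invertible fractional ideals `I`, `J` one has `I ⊕ J ≅ R ⊕ I*J`
as `R`-modules. -/
theorem invertible_ideal_sum_iso
    (R : Type*) [CommRing R] [IsDomain R]
    (h : ∀ I : Ideal R, I ≠ ⊥ → I.FG →
      ∀ J : Ideal (R ⧸ I), J.FG → J.IsPrincipal)
    (I J : FractionalIdeal R⁰ (FractionRing R))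
    (hI : IsUnit I) (hJ : IsUnit J) :
    Nonempty ((↥(I : Submodule R (FractionRing R)) × ↥(J : Submodule R (FractionRing R)))
      ≃ₗ[R] (R × ↥((I * J : FractionalIdeal R⁰ (FractionRing R)) : Submodule R (FractionRing R)))) := by
  classical
  set K := FractionRing R with hK
  open FractionalIdeal in
  -- inverse of I
  obtain ⟨x, c, hx, hxc, hcunit⟩ := kapExistsIntegral ((hI.unit⁻¹ : (FractionalIdeal R⁰ K)ˣ) : FractionalIdeal R⁰ K) (Units.isUnit _)
  obtain ⟨y, b, hy, hyb, hbunit⟩ := kapExistsIntegral J hJ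
  have hinj : Function.Injective (algebraMap R K) := IsFractionRing.injective R K
  -- the ideals are nonzero and finitely generated
  have hcne : c ≠ ⊥ := by
    intro hbot
    rw [hbot] at hcunit
    simp only [coeIdeal_bot] at hcunit
    exact hcunit.ne_zero rfl
  have hbne : b ≠ ⊥ := by
    intro hbot
    rw [hbot] at hbunit
    simp only [coeIdeal_bot] at hbunit
    exact hbunit.ne_zero rfl
  have hcfg : c.FG := Ideal.fg_of_isUnit hinj c hcunit
  have hbfg : b.FG := Ideal.fg_of_isUnit hinj b hbunit
  have hcbne : c * b ≠ ⊥ := by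
    rw [Ne, Ideal.mul_eq_bot]
    tauto
  have hcbfg : (c * b).FG := Submodule.FG.mul hcfg hbfg
  -- apply the hypothesis to get a principal generator of c modulo c*b
  set Q := Ideal.Quotient.mk (c * b) with hQ
  have hmapfg : (c.map Q).FG := Ideal.FG.map hcfg Q
  have hprin : (c.map Q).IsPrincipal := h (c * b) hcbne hcbfg _ hmapfg
  obtain ⟨g0, hg0⟩ := hprin.principal
  obtain ⟨d0, rfl⟩ := Ideal.Quotient.mk_surjective g0
  -- c = span {d0} ⊔ c * b
  have hd0c : d0 ∈ c := by
    have : Q d0 ∈ c.map Q := by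
      rw [hg0]
      exact Submodule.mem_span_singleton_self _
    obtain ⟨x', hx', hQx⟩ := Ideal.mem_map_iff_of_surjective Q Ideal.Quotient.mk_surjective |>.mp this
    have hmem2 : d0 - x' ∈ c * b := Ideal.Quotient.eq.mp hQx.symm
    have hsub : d0 = x' + (d0 - x') := by ring
    rw [hsub]
    exact add_mem hx' (Ideal.mul_le_left hmem2)
  have hcs0 : c = Ideal.span {d0} ⊔ c * b := by
    apply le_antisymm
    · intro z hz
      have : Q z ∈ c.map Q := Ideal.mem_map_of_mem Q hz
      rw [hg0] at this
      obtain ⟨r, hr⟩ := Submodule.mem_span_singleton.mp this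
      obtain ⟨r0, rfl⟩ := Ideal.Quotient.mk_surjective r
      have hmem3 : z - r0 * d0 ∈ c * b := by
        apply Ideal.Quotient.eq.mp
        rw [_root_.map_mul]
        exact hr.symm
      have hsub : z = r0 * d0 + (z - r0 * d0) := by ring
      rw [hsub]
      exact add_mem (Submodule.mem_sup_left (Ideal.mem_span_singleton'.mpr ⟨r0, rfl⟩))
        (Submodule.mem_sup_right hmem3)
    · apply sup_le
      · rw [Ideal.span_le, Set.singleton_subset_iff]
        exact hd0c
      · exact Ideal.mul_le_left
  -- adjust d0 to be nonzero
  obtain ⟨d, hdne, hcs⟩ : ∃ d : R, d ≠ 0 ∧ c = Ideal.span {d} ⊔ c * b := by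
    by_cases hd0 : d0 = 0
    · obtain ⟨e, he, hene⟩ := (Submodule.ne_bot_iff (c * b : Ideal R)).mp hcbne
      refine ⟨e, hene, ?_⟩
      have hre : Ideal.span {e} ⊔ c * b = c * b :=
        sup_eq_right.mpr (by rw [Ideal.span_le, Set.singleton_subset_iff]; exact he)
      rw [hre]
      conv_lhs => rw [hcs0, hd0, Ideal.span_singleton_eq_bot.mpr rfl, bot_sup_eq]
    · exact ⟨d0, hd0, hcs0⟩
  have hdK : algebraMap R K d ≠ 0 := fun hh => hdne (hinj (hh.trans (_root_.map_zero _).symm))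
  -- the translated ideal A isomorphic to I
  set A : FractionalIdeal R⁰ K := spanSingleton R⁰ (algebraMap R K d * x⁻¹) * I with hA
  have hIinv : I * ((hI.unit⁻¹ : (FractionalIdeal R⁰ K)ˣ) : FractionalIdeal R⁰ K) = 1 :=
    hI.mul_val_inv
  have hAc : A * (c : FractionalIdeal R⁰ K) = spanSingleton R⁰ (algebraMap R K d) := by
    rw [hA, ← hxc]
    rw [show spanSingleton R⁰ (algebraMap R K d * x⁻¹) * I *
        (spanSingleton R⁰ x * ((hI.unit⁻¹ : (FractionalIdeal R⁰ K)ˣ) : FractionalIdeal R⁰ K))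
        = (spanSingleton R⁰ (algebraMap R K d * x⁻¹) * spanSingleton R⁰ x) *
          (I * ((hI.unit⁻¹ : (FractionalIdeal R⁰ K)ˣ) : FractionalIdeal R⁰ K)) from by ring]
    rw [spanSingleton_mul_spanSingleton, hIinv, mul_one, mul_assoc,
      inv_mul_cancel₀ hx, mul_one]
  have hdc : d ∈ c := by
    rw [hcs]
    exact Submodule.mem_sup_left (Submodule.mem_span_singleton_self d)
  have hdlec : spanSingleton R⁰ (algebraMap R K d) ≤ (c : FractionalIdeal R⁰ K) := by
    rw [spanSingleton_le_iff_mem]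
    exact mem_coeIdeal_of_mem R⁰ hdc
  have hcCinv : (c : FractionalIdeal R⁰ K) *
      ((hcunit.unit⁻¹ : (FractionalIdeal R⁰ K)ˣ) : FractionalIdeal R⁰ K) = 1 :=
    hcunit.mul_val_inv
  have hAle1 : A ≤ 1 := by
    have h1 : A = spanSingleton R⁰ (algebraMap R K d) *
        ((hcunit.unit⁻¹ : (FractionalIdeal R⁰ K)ˣ) : FractionalIdeal R⁰ K) := by
      rw [← hAc]
      rw [mul_assoc, hcCinv, mul_one]
    rw [h1, ← hcCinv]
    exact mul_le_mul' hdlec le_rfl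
  have hble1 : (b : FractionalIdeal R⁰ K) ≤ 1 := coeIdeal_le_one
  have hsum : A + (b : FractionalIdeal R⁰ K) = 1 := by
    apply hcunit.mul_right_cancel
    rw [add_mul, hAc, one_mul]
    rw [← coeIdeal_span_singleton, ← coeIdeal_mul, ← coeIdeal_sup]
    rw [show Ideal.span {d} ⊔ b * c = Ideal.span {d} ⊔ c * b from by rw [mul_comm]]
    rw [← hcs]
  have hxyne : algebraMap R K d * x⁻¹ * y ≠ 0 :=
    mul_ne_zero (mul_ne_zero hdK (inv_ne_zero hx)) hy
  have hABprod : A * (b : FractionalIdeal R⁰ K)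
      = spanSingleton R⁰ (algebraMap R K d * x⁻¹ * y) * (I * J) := by
    rw [hA, ← hyb,
      show spanSingleton R⁰ (algebraMap R K d * x⁻¹ * y)
        = spanSingleton R⁰ (algebraMap R K d * x⁻¹) * spanSingleton R⁰ y from
        (spanSingleton_mul_spanSingleton _ _).symm]
    ring
  -- assemble the equivalences
  obtain ⟨e2⟩ := kapCoprimeEquiv A (b : FractionalIdeal R⁰ K) hAle1 hble1 hsum
  have eI : (I : Submodule R K) ≃ₗ[R] (A : Submodule R K) :=
    (kapMulEquiv (algebraMap R K d * x⁻¹) (mul_ne_zero hdK (inv_ne_zero hx)) I).trans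
      (LinearEquiv.ofEq _ _ (congrArg _ hA.symm))
  have eJ : (J : Submodule R K) ≃ₗ[R] ((b : FractionalIdeal R⁰ K) : Submodule R K) :=
    (kapMulEquiv y hy J).trans (LinearEquiv.ofEq _ _ (congrArg _ hyb))
  have e3 : ((A * (b : FractionalIdeal R⁰ K) : FractionalIdeal R⁰ K) : Submodule R K)
      ≃ₗ[R] ((I * J : FractionalIdeal R⁰ K) : Submodule R K) :=
    (LinearEquiv.ofEq _ _ (congrArg _ hABprod)).trans
      (kapMulEquiv (algebraMap R K d * x⁻¹ * y) hxyne (I * J)).symm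
  exact ⟨(eI.prodCongr eJ).trans (e2.trans ((LinearEquiv.refl R R).prodCongr e3))⟩
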